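/- Let N ∈ ℕ, d > 0, and let A̲ be any real N×N matrix. Let B be the N²×N² nonbacktracking matrix associated with d^{−1/2}·A̲, i.e. the matrix with entries B_{ef} := d^{−1/2}·A̲_{uv}·1_{y = u}·1_{x ≠ v} for e = (x, y) ∈ [N]² and f = (u, v) ∈ [N]². Let t ∈ ℂ satisfy t² ≠ d^{−1}·A̲_{xy}·A̲_{yx} for all x, y ∈ [N]. Define the N×N matrix A̲(t) with entries A̲(t)_{xy} := t·√d·A̲_{xy}/(t²·d − A̲_{xy}·A̲_{yx}), and the diagonal N×N matrix M(t) with diagonal entries m_x(t) := 1 + Σ_{y∈[N]} A̲_{xy}·A̲_{yx}/(t²·d − A̲_{xy}·A̲_{yx}). Then t is an eigenvalue of B (as a complex matrix) if and only if det(M(t) − A̲(t)) = 0. -/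

import Mathlib

open Matrix

noncomputable section

/-- Backtracking-plus-`t` part. -/
def IBC {N : ℕ} (t : ℂ) (h : Matrix (Fin N) (Fin N) ℂ) :
    Matrix (Fin N × Fin N) (Fin N × Fin N) ℂ :=
  Matrix.of fun e f => (if f = e then t else 0) + (if f = (e.2, e.1) then h e.2 e.1 else 0)

/-- Explicit inverse of `IBC`. -/
def IBG {N : ℕ} (t : ℂ) (h : Matrix (Fin N) (Fin N) ℂ) :
    Matrix (Fin N × Fin N) (Fin N × Fin N) ℂ :=
  Matrix.of fun e f =>
    ((if f = e then t else 0) - (if f = (e.2, e.1) then h e.2 e.1 else 0)) /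
      (t ^ 2 - h e.1 e.2 * h e.2 e.1)

def IBP (N : ℕ) : Matrix (Fin N × Fin N) (Fin N) ℂ :=
  Matrix.of fun e z => if e.2 = z then (1 : ℂ) else 0

def IBQ {N : ℕ} (h : Matrix (Fin N) (Fin N) ℂ) : Matrix (Fin N) (Fin N × Fin N) ℂ :=
  Matrix.of fun z f => (if z = f.1 then (1 : ℂ) else 0) * h f.1 f.2

lemma IBC_mul_IBG {N : ℕ} (t : ℂ) (h : Matrix (Fin N) (Fin N) ℂ)
    (hD : ∀ x y : Fin N, t ^ 2 - h x y * h y x ≠ 0) :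
    IBC t h * IBG t h = 1 := by
  ext ⟨x, y⟩ ⟨u, v⟩
  rw [Matrix.mul_apply]
  simp only [IBC, IBG, Matrix.of_apply, add_mul, ite_mul, zero_mul,
    Finset.sum_add_distrib, Finset.sum_ite_eq', Finset.mem_univ, if_true]
  rw [Matrix.one_apply]
  have hc : t ^ 2 - h y x * h x y = t ^ 2 - h x y * h y x := by ring
  rw [hc, ← mul_div_assoc, ← mul_div_assoc, ← add_div, div_eq_iff (hD x y)]
  by_cases h1 : ((u, v) : Fin N × Fin N) = (x, y)
  · by_cases h2 : ((u, v) : Fin N × Fin N) = (y, x)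
    · have h3 := h1.symm.trans h2
      injection h3 with hxy hyx
      subst hxy
      simp only [if_pos h1, if_pos h2, if_pos h1.symm]
      ring
    · simp only [if_pos h1, if_neg h2, if_pos h1.symm]
      ring
  · have h1' : ¬ ((x, y) : Fin N × Fin N) = (u, v) := fun hh => h1 hh.symm
    by_cases h2 : ((u, v) : Fin N × Fin N) = (y, x)
    · simp only [if_neg h1, if_pos h2, if_neg h1']
      ring
    · simp only [if_neg h1, if_neg h2, if_neg h1']
      ring

lemma IBfact {N : ℕ} (t : ℂ) (h : Matrix (Fin N) (Fin N) ℂ) :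
    (Matrix.of fun e f : Fin N × Fin N =>
      h f.1 f.2 * (if e.2 = f.1 then (1:ℂ) else 0) * (if e.1 ≠ f.2 then 1 else 0)) -
      t • (1 : Matrix (Fin N × Fin N) (Fin N × Fin N) ℂ) =
    -(IBC t h) + IBP N * IBQ h := by
  have hPQ : ∀ e f : Fin N × Fin N,
      (IBP N * IBQ h) e f = (if e.2 = f.1 then (1:ℂ) else 0) * h f.1 f.2 := by
    intro e f
    rw [Matrix.mul_apply]
    simp [IBP, IBQ, Finset.sum_ite_eq, ite_mul]
  ext ⟨x, y⟩ ⟨u, v⟩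
  rw [Matrix.add_apply, hPQ, Matrix.sub_apply, Matrix.smul_apply, Matrix.one_apply]
  simp only [IBC, Matrix.of_apply, Matrix.neg_apply]
  by_cases h1 : y = u <;> by_cases h2 : x = v <;>
    by_cases h3 : u = x <;> by_cases h4 : v = y <;>
    simp_all [Prod.ext_iff, eq_comm]

lemma IBGP {N : ℕ} (t : ℂ) (h : Matrix (Fin N) (Fin N) ℂ) (e : Fin N × Fin N) (w : Fin N) :
    (IBG t h * IBP N) e w =
      ((if e.2 = w then t else 0) - (if e.1 = w then h e.2 e.1 else 0)) /
        (t ^ 2 - h e.1 e.2 * h e.2 e.1) := by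
  rw [Matrix.mul_apply]
  simp only [IBG, IBP, Matrix.of_apply, div_mul_eq_mul_div, sub_mul, ite_mul, zero_mul,
    one_mul, mul_one]
  rw [← Finset.sum_div]
  congr 1
  rw [Finset.sum_sub_distrib]
  congr 1
  · rw [Finset.sum_eq_single e]
    · simp
    · intro f _ hf; simp [hf]
    · simp
  · rw [Finset.sum_eq_single ((e.2, e.1) : Fin N × Fin N)]
    · simp
    · intro f _ hf; simp [hf]
    · simp

lemma IBQGP {N : ℕ} (t : ℂ) (h : Matrix (Fin N) (Fin N) ℂ) (z w : Fin N) :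
    (IBQ h * (IBG t h * IBP N)) z w =
      t * h z w / (t ^ 2 - h z w * h w z) -
        (if z = w then ∑ v : Fin N, h z v * h v z / (t ^ 2 - h z v * h v z) else 0) := by
  rw [Matrix.mul_apply]
  rw [Finset.sum_congr rfl (fun f _ => by rw [IBGP t h f w])]
  simp only [IBQ, Matrix.of_apply]
  rw [Fintype.sum_prod_type]
  rw [Finset.sum_eq_single z (fun u _ hu => by
      have hzu : ¬ z = u := fun hh => hu hh.symm
      simp only [ite_mul, zero_mul, one_mul, if_neg hzu]
      exact Finset.sum_const_zero)
    (by simp)]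
  simp only [ite_mul, zero_mul, one_mul, eq_self_iff_true, if_true]
  have key : ∀ v : Fin N, h z v *
      (((if v = w then t else 0) - (if z = w then h v z else 0)) /
        (t ^ 2 - h z v * h v z)) =
      (if v = w then t * h z v / (t ^ 2 - h z v * h v z) else 0) -
      (if z = w then h z v * h v z / (t ^ 2 - h z v * h v z) else 0) := by
    intro v
    by_cases h1 : v = w <;> by_cases h2 : z = w <;> simp [h1, h2] <;> ring
  rw [Finset.sum_congr rfl (fun v _ => key v), Finset.sum_sub_distrib,
    Finset.sum_ite_eq' (Finset.univ : Finset (Fin N))]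
  simp only [Finset.mem_univ, if_true]
  congr 1
  by_cases h2 : z = w <;> simp [h2]

/-- Lemma 5.4 of the paper, Ihara–Bass-type formula: `t` is an eigenvalue
of the nonbacktracking matrix `B` of `d^{-1/2} A̲` if and only if `det(M(t) − A̲(t)) = 0`. -/
theorem statement12 (N : ℕ) (d : ℝ) (hd : 0 < d) (Au : Matrix (Fin N) (Fin N) ℝ)
    (t : ℂ) (ht : ∀ x y : Fin N, t ^ 2 ≠ ((Au x y * Au y x : ℝ) : ℂ) / (d : ℂ))
    (B : Matrix (Fin N × Fin N) (Fin N × Fin N) ℂ)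
    (hB : B = Matrix.of fun e f : Fin N × Fin N =>
      ((Real.sqrt d : ℝ) : ℂ)⁻¹ * ((Au f.1 f.2 : ℝ) : ℂ) *
        (if e.2 = f.1 then 1 else 0) * (if e.1 ≠ f.2 then 1 else 0))
    (At : Matrix (Fin N) (Fin N) ℂ)
    (hAt : At = Matrix.of fun x y : Fin N =>
      t * ((Real.sqrt d : ℝ) : ℂ) * ((Au x y : ℝ) : ℂ) /
        (t ^ 2 * (d : ℂ) - ((Au x y : ℝ) : ℂ) * ((Au y x : ℝ) : ℂ)))
    (Mt : Matrix (Fin N) (Fin N) ℂ)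
    (hMt : Mt = Matrix.diagonal fun x : Fin N =>
      1 + ∑ y : Fin N, ((Au x y : ℝ) : ℂ) * ((Au y x : ℝ) : ℂ) /
        (t ^ 2 * (d : ℂ) - ((Au x y : ℝ) : ℂ) * ((Au y x : ℝ) : ℂ))) :
    Matrix.det (B - t • (1 : Matrix (Fin N × Fin N) (Fin N × Fin N) ℂ)) = 0 ↔
      Matrix.det (Mt - At) = 0 := by
  classical
  have hd0 : (d : ℂ) ≠ 0 := by exact_mod_cast hd.ne'
  have hs0 : ((Real.sqrt d : ℝ) : ℂ) ≠ 0 := by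
    exact_mod_cast (Real.sqrt_pos.mpr hd).ne'
  have hsq : ((Real.sqrt d : ℝ) : ℂ) * ((Real.sqrt d : ℝ) : ℂ) = (d : ℂ) := by
    norm_cast
    exact Real.mul_self_sqrt hd.le
  set s : ℂ := ((Real.sqrt d : ℝ) : ℂ) with hs
  set h : Matrix (Fin N) (Fin N) ℂ :=
    Matrix.of (fun x y => s⁻¹ * ((Au x y : ℝ) : ℂ)) with hh
  -- nonvanishing denominators
  have hD2 : ∀ x y, t ^ 2 * (d : ℂ) - ((Au x y : ℝ) : ℂ) * ((Au y x : ℝ) : ℂ) ≠ 0 := by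
    intro x y hcon
    apply ht x y
    field_simp
    push_cast
    linear_combination hcon
  have hD2' : ∀ x y, t ^ 2 * (s * s) - ((Au x y : ℝ) : ℂ) * ((Au y x : ℝ) : ℂ) ≠ 0 := by
    intro x y
    rw [hsq]
    exact hD2 x y
  have hD : ∀ x y : Fin N, t ^ 2 - h x y * h y x ≠ 0 := by
    intro x y hcon
    apply hD2' x y
    simp only [hh, Matrix.of_apply] at hcon
    have hexp : t ^ 2 = s⁻¹ * ((Au x y : ℝ) : ℂ) * (s⁻¹ * ((Au y x : ℝ) : ℂ)) := by
      linear_combination hcon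
    rw [hexp]
    field_simp
    ring
  have hDraw : ∀ x y : Fin N,
      t ^ 2 - s⁻¹ * ((Au x y : ℝ) : ℂ) * (s⁻¹ * ((Au y x : ℝ) : ℂ)) ≠ 0 := hD
  -- pieces
  have hCG := IBC_mul_IBG t h hD
  have hdetC : Matrix.det (IBC t h) ≠ 0 := by
    intro hcon
    have := congrArg Matrix.det hCG
    rw [Matrix.det_mul, Matrix.det_one, hcon, zero_mul] at this
    exact zero_ne_one this
  have hBeq : B - t • (1 : Matrix (Fin N × Fin N) (Fin N × Fin N) ℂ) =
      -(IBC t h) + IBP N * IBQ h := by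
    rw [hB]
    exact IBfact t h
  have hfact : B - t • (1 : Matrix (Fin N × Fin N) (Fin N × Fin N) ℂ) =
      (-(IBC t h)) * (1 - IBG t h * (IBP N * IBQ h)) := by
    rw [Matrix.mul_sub, Matrix.mul_one, Matrix.neg_mul, ← Matrix.mul_assoc, hCG,
      Matrix.one_mul, sub_neg_eq_add, hBeq]
  -- identify the small determinant
  have hsmall : (1 : Matrix (Fin N) (Fin N) ℂ) - IBQ h * (IBG t h * IBP N) = Mt - At := by
    ext z w
    rw [Matrix.sub_apply, Matrix.sub_apply, Matrix.one_apply, IBQGP t h z w]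
    simp only [hMt, hAt, Matrix.of_apply, Matrix.diagonal_apply]
    have hAtval : t * h z w / (t ^ 2 - h z w * h w z) =
        t * s * ((Au z w : ℝ) : ℂ) /
          (t ^ 2 * (d : ℂ) - ((Au z w : ℝ) : ℂ) * ((Au w z : ℝ) : ℂ)) := by
      rw [← hsq]
      simp only [hh, Matrix.of_apply]
      rw [div_eq_div_iff (hDraw z w) (hD2' z w)]
      field_simp
    have hMtval : ∀ v : Fin N, h z v * h v z / (t ^ 2 - h z v * h v z) =
        ((Au z v : ℝ) : ℂ) * ((Au v z : ℝ) : ℂ) /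
          (t ^ 2 * (d : ℂ) - ((Au z v : ℝ) : ℂ) * ((Au v z : ℝ) : ℂ)) := by
      intro v
      rw [← hsq]
      simp only [hh, Matrix.of_apply]
      rw [div_eq_div_iff (hDraw z v) (hD2' z v)]
      field_simp
    rw [hAtval]
    by_cases h2 : z = w
    · subst h2
      simp only [if_true]
      rw [Finset.sum_congr rfl (fun v _ => hMtval v)]
      ring
    · simp only [h2, if_false]
      ring
  -- conclude
  rw [hfact, Matrix.det_mul]
  have hne : Matrix.det (-(IBC t h)) ≠ 0 := by
    rw [Matrix.det_neg]
    simp [hdetC]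
  have hdd : Matrix.det (1 - IBG t h * (IBP N * IBQ h)) = Matrix.det (Mt - At) := by
    have h3 : (1 : Matrix (Fin N × Fin N) (Fin N × Fin N) ℂ) - IBG t h * (IBP N * IBQ h) =
        1 - (IBG t h * IBP N) * IBQ h := by
      rw [Matrix.mul_assoc]
    rw [h3, Matrix.det_one_sub_mul_comm, hsmall]
  rw [hdd, mul_eq_zero]
  simp [hne]
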